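/- Let P be a finite index set, and for each p ∈ P let N_p, n_p be nonnegative integers and μ_p a complex number. Then d/ds at s = 0 of the product ∏_{p ∈ P} binom(-N_p - 1 + μ_p s, n_p) equals ∏_{p ∈ P} binom(-N_p - 1, n_p) · Σ_{p ∈ P} μ_p (h_{N_p} - h_{N_p + n_p}), where h_n denotes the n-th harmonic number. -/

import Mathlib

/-- Generalized binomial coefficient `binom(z, n) = z(z-1)⋯(z-n+1)/n!` for complex `z`. -/
noncomputable def cbinom (z : ℂ) (n : ℕ) : ℂ :=
  (∏ i ∈ Finset.range n, (z - i)) / (n.factorial : ℂ)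

lemma harmonic_sub (N n : ℕ) :
    harmonic (N + n) - harmonic N = ∑ i ∈ Finset.range n, ((N + i + 1 : ℕ) : ℚ)⁻¹ := by
  unfold harmonic
  rw [Finset.sum_range_add, add_sub_cancel_left]

lemma factor_ne_zero (N : ℕ) (i : ℕ) : (-(N : ℂ) - 1 - i) ≠ 0 := by
  intro h
  have h2 : ((N + 1 + i : ℕ) : ℂ) = 0 := by push_cast; linear_combination -h
  exact absurd (Nat.cast_eq_zero.mp h2) (by omega)

lemma cbinom_ne_zero (N n : ℕ) : cbinom (-(N : ℂ) - 1) n ≠ 0 := by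
  unfold cbinom
  apply div_ne_zero
  · exact Finset.prod_ne_zero_iff.2 fun i _ => factor_ne_zero N i
  · exact_mod_cast Nat.factorial_ne_zero n

lemma key (N n : ℕ) (μ : ℂ) :
    HasDerivAt (fun s : ℂ => cbinom (-(N : ℂ) - 1 + μ * s) n)
      (cbinom (-(N : ℂ) - 1) n *
        (μ * (((harmonic N : ℚ) : ℂ) - ((harmonic (N + n) : ℚ) : ℂ)))) 0 := by
  have h1 : ∀ i ∈ Finset.range n,
      HasDerivAt (fun s : ℂ => (-(N : ℂ) - 1 + μ * s - i)) μ 0 := by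
    intro i _
    simpa using (((hasDerivAt_id (0:ℂ)).const_mul μ).const_add (-(N:ℂ)-1)).sub_const (i:ℂ)
  have h2 := (HasDerivAt.fun_finsetProd h1).div_const (n.factorial : ℂ)
  have hval : (∑ i ∈ Finset.range n,
        (∏ j ∈ (Finset.range n).erase i, (-(N:ℂ) - 1 + μ * 0 - j)) • μ) / (n.factorial : ℂ)
      = cbinom (-(N : ℂ) - 1) n *
        (μ * (((harmonic N : ℚ) : ℂ) - ((harmonic (N + n) : ℚ) : ℂ))) := by
    have hstep : ∀ i ∈ Finset.range n,
        (∏ j ∈ (Finset.range n).erase i, (-(N:ℂ) - 1 + μ * 0 - j)) • μ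
        = (∏ j ∈ Finset.range n, (-(N:ℂ) - 1 - j)) * (-(N:ℂ) - 1 - i)⁻¹ * μ := by
      intro i hi
      rw [smul_eq_mul]
      congr 1
      have hpe := Finset.prod_erase_mul (Finset.range n)
        (fun j => (-(N : ℂ) - 1 + μ * 0 - (j:ℂ))) hi
      have hpc : ∏ j ∈ Finset.range n, (-(N : ℂ) - 1 + μ * 0 - j)
          = ∏ j ∈ Finset.range n, (-(N:ℂ) - 1 - j) :=
        Finset.prod_congr rfl fun j _ => by ring
      have hpc' : ∏ j ∈ (Finset.range n).erase i, (-(N : ℂ) - 1 + μ * 0 - j)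
          = ∏ j ∈ (Finset.range n).erase i, (-(N:ℂ) - 1 - j) :=
        Finset.prod_congr rfl fun j _ => by ring
      rw [hpc, hpc'] at hpe
      rw [hpc']
      have hne := factor_ne_zero N i
      field_simp
      simpa [mul_comm] using hpe
    rw [Finset.sum_congr rfl hstep, ← Finset.sum_mul, ← Finset.mul_sum]
    have hsum : ∑ i ∈ Finset.range n, (-(N:ℂ) - 1 - i)⁻¹ =
        ((harmonic N : ℚ) : ℂ) - ((harmonic (N + n) : ℚ) : ℂ) := by
      have h3 : ((harmonic N : ℚ) : ℂ) - ((harmonic (N + n) : ℚ) : ℂ)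
          = -((harmonic (N+n) - harmonic N : ℚ) : ℂ) := by push_cast; ring
      rw [h3, harmonic_sub N n]
      push_cast
      rw [← Finset.sum_neg_distrib]
      refine Finset.sum_congr rfl fun i _ => ?_
      rw [← inv_neg]
      congr 1
      ring
    rw [hsum]
    unfold cbinom
    field_simp
  rw [hval] at h2
  exact h2

/-- Derivative at `s = 0` of `s ↦ ∏_p binom(-N_p - 1 + μ_p s, n_p)` equals
`∏_p binom(-N_p-1, n_p) · Σ_p μ_p (h_{N_p} - h_{N_p+n_p})`. -/
theorem deriv_prod_cbinom_at_zero (P : ℕ) (N n : Fin P → ℕ) (μ : Fin P → ℂ) :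
    deriv (fun s : ℂ => ∏ p, cbinom (-(N p : ℂ) - 1 + μ p * s) (n p)) 0 =
      (∏ p, cbinom (-(N p : ℂ) - 1) (n p)) *
        ∑ p, μ p * (((harmonic (N p) : ℚ) : ℂ) - ((harmonic (N p + n p) : ℚ) : ℂ)) := by
  have h := HasDerivAt.fun_finsetProd (u := Finset.univ)
    (f := fun p (s : ℂ) => cbinom (-(N p : ℂ) - 1 + μ p * s) (n p))
    (fun p _ => key (N p) (n p) (μ p))
  rw [h.deriv, Finset.mul_sum]
  refine Finset.sum_congr rfl fun p _ => ?_
  rw [smul_eq_mul, ← mul_assoc]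
  congr 1
  have hpc : ∀ q ∈ Finset.univ.erase p,
      cbinom (-(N q : ℂ) - 1 + μ q * 0) (n q) = cbinom (-(N q : ℂ) - 1) (n q) := by
    intro q _; norm_num
  rw [Finset.prod_congr rfl hpc]
  exact Finset.prod_erase_mul _ _ (Finset.mem_univ p)
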